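/- For positive integers x, y and nonnegative integers a, b with a ≥ b, x ≥ y, and x + b ≥ a, we have (x+a)!·b!·((x+a+1)···(x+a+y) − (b+1)···(b+y)) + (x+b)!·a!·((x+b+1)···(x+b+y) − (a+1)···(a+y)) ≥ 0, with the first parenthesized factor nonnegative. -/
import Mathlib

/-- `k!(S-k)! ≤ m!(S-m)!` when `m ≤ k` and `2k ≤ S`. -/
lemma fact_mul_fact_le_aux (m k S : ℕ) (hm : m ≤ k) (hk : 2 * k ≤ S) :
    k.factorial * (S - k).factorial ≤ m.factorial * (S - m).factorial := by
  induction k with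
  | zero => interval_cases m; simp
  | succ k ih =>
    rcases Nat.eq_or_lt_of_le hm with h | h
    · simp [h]
    · have hm' : m ≤ k := Nat.lt_succ_iff.mp h
      have hk' : 2 * k ≤ S := by omega
      refine le_trans ?_ (ih hm' hk')
      have h1 : S - k = (S - (k + 1)) + 1 := by omega
      have h2 : (k + 1) ≤ S - (k + 1) + 1 := by omega
      calc (k + 1).factorial * (S - (k + 1)).factorial
          = (k + 1) * (k.factorial * (S - (k + 1)).factorial) := by
            rw [Nat.factorial_succ]; ring
        _ ≤ (S - (k + 1) + 1) * (k.factorial * (S - (k + 1)).factorial) :=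
            Nat.mul_le_mul_right _ h2
        _ = k.factorial * (S - k).factorial := by
            rw [h1, Nat.factorial_succ]; ring

/-- `k!(S-k)! ≤ m!(S-m)!` when `m ≤ k` and `m + k ≤ S`. -/
lemma fact_mul_fact_le (m k S : ℕ) (hm : m ≤ k) (h : m + k ≤ S) :
    k.factorial * (S - k).factorial ≤ m.factorial * (S - m).factorial := by
  by_cases h2 : 2 * k ≤ S
  · exact fact_mul_fact_le_aux m k S hm h2
  · have := fact_mul_fact_le_aux m (S - k) S (by omega) (by omega)
    rw [show S - (S - k) = k by omega] at this
    calc k.factorial * (S - k).factorial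
        = (S - k).factorial * k.factorial := by ring
      _ ≤ m.factorial * (S - m).factorial := this

lemma fact_mul_prod (c y : ℕ) :
    (c.factorial : ℤ) * ∏ i ∈ Finset.Icc (c + 1) (c + y), (i : ℤ)
      = (c + y).factorial := by
  induction y with
  | zero => simp
  | succ y ih =>
    rw [show c + (y + 1) = (c + y) + 1 by ring,
      Finset.prod_Icc_succ_top (by omega : c + 1 ≤ c + y + 1),
      Nat.factorial_succ]
    push_cast
    rw [← mul_assoc, ih]
    ring

theorem factorial_rising_product_nonneg (x y a b : ℕ) (hx : 0 < x) (hy : 0 < y)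
    (hab : b ≤ a) (hxy : y ≤ x) (hxba : a ≤ x + b) :
    0 ≤ ((x + a).factorial * b.factorial : ℤ) *
          ((∏ i ∈ Finset.Icc (x + a + 1) (x + a + y), (i : ℤ)) -
            ∏ i ∈ Finset.Icc (b + 1) (b + y), (i : ℤ)) +
        ((x + b).factorial * a.factorial : ℤ) *
          ((∏ i ∈ Finset.Icc (x + b + 1) (x + b + y), (i : ℤ)) -
            ∏ i ∈ Finset.Icc (a + 1) (a + y), (i : ℤ)) ∧
    0 ≤ (∏ i ∈ Finset.Icc (x + a + 1) (x + a + y), (i : ℤ)) -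
          ∏ i ∈ Finset.Icc (b + 1) (b + y), (i : ℤ) := by
  set S := x + a + b + y with hS
  have e1 := fact_mul_prod (x + a) y
  have e2 := fact_mul_prod b y
  have e3 := fact_mul_prod (x + b) y
  have e4 := fact_mul_prod a y
  -- first pairwise factorial inequality: m = b, k = b + y
  have k1 : (b + y).factorial * (x + a).factorial
      ≤ b.factorial * (x + a + y).factorial := by
    have := fact_mul_fact_le b (b + y) S (by omega) (by omega)
    rwa [show S - (b + y) = x + a by omega, show S - b = x + a + y by omega] at this
  -- second pairwise inequality: m = a, k = a + y
  have k2 : (a + y).factorial * (x + b).factorial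
      ≤ a.factorial * (x + b + y).factorial := by
    have := fact_mul_fact_le a (a + y) S (by omega) (by omega)
    rwa [show S - (a + y) = x + b by omega, show S - a = x + b + y by omega] at this
  have k1' : ((b + y).factorial * (x + a).factorial : ℤ)
      ≤ (b.factorial * (x + a + y).factorial : ℤ) := by exact_mod_cast k1
  have k2' : ((a + y).factorial * (x + b).factorial : ℤ)
      ≤ (a.factorial * (x + b + y).factorial : ℤ) := by exact_mod_cast k2
  have E1 : ((x + a).factorial * b.factorial : ℤ) *
        ((∏ i ∈ Finset.Icc (x + a + 1) (x + a + y), (i : ℤ)) -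
          ∏ i ∈ Finset.Icc (b + 1) (b + y), (i : ℤ))
      = (b.factorial : ℤ) * (x + a + y).factorial
        - ((b + y).factorial : ℤ) * (x + a).factorial := by
    push_cast
    rw [mul_sub]
    rw [show ((x + a).factorial : ℤ) * b.factorial *
        ∏ i ∈ Finset.Icc (x + a + 1) (x + a + y), (i : ℤ)
      = (b.factorial : ℤ) * (((x + a).factorial : ℤ) *
        ∏ i ∈ Finset.Icc (x + a + 1) (x + a + y), (i : ℤ)) by ring,
      show ((x + a).factorial : ℤ) * b.factorial *
        ∏ i ∈ Finset.Icc (b + 1) (b + y), (i : ℤ)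
      = ((x + a).factorial : ℤ) * ((b.factorial : ℤ) *
        ∏ i ∈ Finset.Icc (b + 1) (b + y), (i : ℤ)) by ring, e1, e2]
    push_cast
    ring
  have E2 : ((x + b).factorial * a.factorial : ℤ) *
        ((∏ i ∈ Finset.Icc (x + b + 1) (x + b + y), (i : ℤ)) -
          ∏ i ∈ Finset.Icc (a + 1) (a + y), (i : ℤ))
      = (a.factorial : ℤ) * (x + b + y).factorial
        - ((a + y).factorial : ℤ) * (x + b).factorial := by
    push_cast
    rw [mul_sub]
    rw [show ((x + b).factorial : ℤ) * a.factorial *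
        ∏ i ∈ Finset.Icc (x + b + 1) (x + b + y), (i : ℤ)
      = (a.factorial : ℤ) * (((x + b).factorial : ℤ) *
        ∏ i ∈ Finset.Icc (x + b + 1) (x + b + y), (i : ℤ)) by ring,
      show ((x + b).factorial : ℤ) * a.factorial *
        ∏ i ∈ Finset.Icc (a + 1) (a + y), (i : ℤ)
      = ((x + b).factorial : ℤ) * ((a.factorial : ℤ) *
        ∏ i ∈ Finset.Icc (a + 1) (a + y), (i : ℤ)) by ring, e3, e4]
    push_cast
    ring
  constructor
  · rw [E1, E2]
    push_cast at k1' k2' ⊢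
    linarith
  · have hpos : (0 : ℤ) < ((x + a).factorial * b.factorial : ℤ) := by
      positivity
    have h0 : 0 ≤ ((x + a).factorial * b.factorial : ℤ) *
        ((∏ i ∈ Finset.Icc (x + a + 1) (x + a + y), (i : ℤ)) -
          ∏ i ∈ Finset.Icc (b + 1) (b + y), (i : ℤ)) := by
      rw [E1]; push_cast at k1' ⊢; linarith
    exact nonneg_of_mul_nonneg_right h0 hpos
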